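/- arXiv:1410.5620 — 2 statements merged into one kernel-verified Lean document; each statement's English description precedes it below -/
import Mathlib

section
/- Norm bound for the deflated preconditioned operator: with P_G = P/η + f dᵀ and J_G = J/η + f dᵀ as above, in any submultiplicative matrix norm, ‖P_G⁻¹ J_G - P⁻¹ J‖ ≤ |η/(1 + η dᵀ P⁻¹ f)| · ‖P⁻¹ f dᵀ‖ · ‖P⁻¹ J - I‖. -/
open Matrix

variable {n : ℕ}

lemma mul_vecMulVec' (M : Matrix (Fin n) (Fin n) ℝ) (f d : Fin n → ℝ) :
    M * vecMulVec f d = vecMulVec (M *ᵥ f) d := by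
  ext i j
  simp [mul_apply, vecMulVec_apply, mulVec, dotProduct, Finset.sum_mul, mul_assoc]

lemma vecMulVec_vecMulVec (f d g e : Fin n → ℝ) :
    vecMulVec f d * vecMulVec g e = (d ⬝ᵥ g) • vecMulVec f e := by
  ext i j
  simp [mul_apply, vecMulVec_apply, dotProduct, Finset.mul_sum, Finset.sum_mul]
  exact Finset.sum_congr rfl fun k _ => by ring

lemma deflated_key_identity (P J : Matrix (Fin n) (Fin n) ℝ) (hP : IsUnit P)
    (η : ℝ) (hη : η ≠ 0) (f d : Fin n → ℝ)
    (hden : 1 + η * (d ⬝ᵥ (P⁻¹ *ᵥ f)) ≠ 0) :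
    (η⁻¹ • P + vecMulVec f d)⁻¹ * (η⁻¹ • J + vecMulVec f d) - P⁻¹ * J
      = (-(η / (1 + η * (d ⬝ᵥ (P⁻¹ *ᵥ f))))) • ((P⁻¹ * vecMulVec f d) * (P⁻¹ * J - 1)) := by
  set Q := P⁻¹ with hQ
  set g := Q *ᵥ f with hg
  set α := d ⬝ᵥ g with hα
  set s := 1 + η * α with hs
  have hsne : s ≠ 0 := hden
  have hPQ : P * Q = 1 := mul_nonsing_inv P ((isUnit_iff_isUnit_det P).mp hP)
  have hQP : Q * P = 1 := nonsing_inv_mul P ((isUnit_iff_isUnit_det P).mp hP)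
  have hfd : P * vecMulVec g d = vecMulVec f d := by
    rw [mul_vecMulVec', hg, mulVec_mulVec, hPQ, one_mulVec]
  have hQfd : Q * vecMulVec f d = vecMulVec g d := by
    rw [mul_vecMulVec', hg]
  have hAB : (η⁻¹ • P + vecMulVec f d) * (η • Q - (η^2/s) • (vecMulVec g d * Q)) = 1 := by
    have e2 : vecMulVec f d * (vecMulVec g d * Q) = α • (vecMulVec f d * Q) := by
      rw [← Matrix.mul_assoc, vecMulVec_vecMulVec, ← hα, smul_mul_assoc]
    rw [mul_sub, add_mul, add_mul]
    simp only [smul_mul_assoc, mul_smul_comm, smul_smul]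
    rw [← Matrix.mul_assoc, hPQ, hfd, e2, smul_smul, mul_inv_cancel₀ hη, one_smul]
    have hc : η^2/s * η⁻¹ = η - η^2/s * α := by field_simp; ring
    rw [hc, sub_smul]
    abel
  have hAinv : (η⁻¹ • P + vecMulVec f d)⁻¹ = η • Q - (η^2/s) • (vecMulVec g d * Q) :=
    inv_eq_right_inv hAB
  have e3 : vecMulVec g d * Q * vecMulVec f d = α • vecMulVec g d := by
    rw [Matrix.mul_assoc, hQfd, vecMulVec_vecMulVec, ← hα]
  rw [hAinv, mul_add, sub_mul, sub_mul]
  simp only [smul_mul_assoc, mul_smul_comm, smul_smul]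
  rw [inv_mul_cancel₀ hη, one_smul, e3, smul_smul, hQfd]
  have hc1 : η⁻¹ * (η ^ 2 / s) = η / s := by field_simp
  have hc2 : (η : ℝ) • (vecMulVec g d) - (η ^ 2 / s * α) • vecMulVec g d
      = (η / s) • vecMulVec g d := by
    rw [← sub_smul]; congr 1; field_simp; ring
  rw [hc1, hc2, Matrix.mul_assoc, mul_sub, mul_one, smul_sub]
  module

theorem deflated_preconditioner_norm_bound {n : ℕ}
    (P J : Matrix (Fin n) (Fin n) ℝ) (hP : IsUnit P)
    (η : ℝ) (hη : η ≠ 0) (f d : Fin n → ℝ)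
    (hden : 1 + η * (d ⬝ᵥ (P⁻¹ *ᵥ f)) ≠ 0)
    (N : Matrix (Fin n) (Fin n) ℝ → ℝ)
    (hN0 : ∀ A, 0 ≤ N A)
    (hNsmul : ∀ (c : ℝ) (A : Matrix (Fin n) (Fin n) ℝ), N (c • A) = |c| * N A)
    (hNmul : ∀ A B : Matrix (Fin n) (Fin n) ℝ, N (A * B) ≤ N A * N B) :
    N ((η⁻¹ • P + vecMulVec f d)⁻¹ * (η⁻¹ • J + vecMulVec f d) - P⁻¹ * J) ≤
      |η / (1 + η * (d ⬝ᵥ (P⁻¹ *ᵥ f)))| * N (P⁻¹ * vecMulVec f d) * N (P⁻¹ * J - 1) := by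
  calc N ((η⁻¹ • P + vecMulVec f d)⁻¹ * (η⁻¹ • J + vecMulVec f d) - P⁻¹ * J)
      = |η / (1 + η * (d ⬝ᵥ (P⁻¹ *ᵥ f)))| * N ((P⁻¹ * vecMulVec f d) * (P⁻¹ * J - 1)) := by
        rw [deflated_key_identity P J hP η hη f d hden, hNsmul, abs_neg]
    _ ≤ |η / (1 + η * (d ⬝ᵥ (P⁻¹ *ᵥ f)))| * (N (P⁻¹ * vecMulVec f d) * N (P⁻¹ * J - 1)) :=
        mul_le_mul_of_nonneg_left (hNmul _ _) (abs_nonneg _)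
    _ = _ := (mul_assoc _ _ _).symm
end

section
/- For the Bratu–Gelfand problem u'' + λe^u = 0, u(0) = u(1) = 0, every solution has the one-parameter form u(x) = -2 ln( cosh((x - 1/2)θ/2) / cosh(θ/4) ) where θ satisfies θ = √(2λ) cosh(θ/4); consequently, for λ > 0 the number of solutions equals the number of positive roots θ of this transcendental equation, and the function u so defined indeed satisfies u'' + λ e^u = 0 with u(0) = u(1) = 0 whenever θ = √(2λ) cosh(θ/4). -/
open Real

theorem bratu_gelfand_explicit_solution
    (lam θ : ℝ) (hlam : 0 < lam) (hθ : 0 < θ)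
    (htrans : θ = Real.sqrt (2 * lam) * Real.cosh (θ / 4))
    (u : ℝ → ℝ)
    (hu : ∀ x, u x = -2 * Real.log (Real.cosh ((x - 1/2) * θ / 2) / Real.cosh (θ / 4))) :
    u 0 = 0 ∧ u 1 = 0 ∧
    ∀ x ∈ Set.Ioo (0 : ℝ) 1, deriv (deriv u) x + lam * Real.exp (u x) = 0 := by
  have hc4 : (0:ℝ) < Real.cosh (θ / 4) := Real.cosh_pos _
  have hu0 : u 0 = 0 := by
    rw [hu]
    have : ((0:ℝ) - 1/2) * θ / 2 = -(θ/4) := by ring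
    rw [this, Real.cosh_neg, div_self hc4.ne', Real.log_one]; ring
  have hu1 : u 1 = 0 := by
    rw [hu]
    have : ((1:ℝ) - 1/2) * θ / 2 = θ/4 := by ring
    rw [this, div_self hc4.ne', Real.log_one]; ring
  refine ⟨hu0, hu1, ?_⟩
  -- key algebraic identity
  have hθsq : θ ^ 2 = 2 * lam * Real.cosh (θ / 4) ^ 2 := by
    have h2l : (0:ℝ) ≤ 2 * lam := by linarith
    have h1 : θ ^ 2 = (Real.sqrt (2 * lam) * Real.cosh (θ / 4)) ^ 2 := by rw [← htrans]
    rw [mul_pow, Real.sq_sqrt h2l] at h1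
    exact h1
  set s : ℝ → ℝ := fun x => (x - 1/2) * θ / 2 with hs
  have hds : ∀ x : ℝ, HasDerivAt s (θ / 2) x := by
    intro x
    have h1 : HasDerivAt (fun x : ℝ => (x - 1/2) * θ) θ x := by
      have := (((hasDerivAt_id x).sub_const ((1:ℝ)/2)).mul_const θ)
      refine this.congr_deriv ?_
      ring
    convert h1.div_const 2 using 1
  have hcpos : ∀ x : ℝ, (0:ℝ) < Real.cosh (s x) := fun x => Real.cosh_pos _
  -- first derivative
  have hd1 : ∀ x : ℝ, HasDerivAt u (-θ * Real.tanh (s x)) x := by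
    intro x
    have hc : HasDerivAt (fun x => Real.cosh (s x)) (Real.sinh (s x) * (θ/2)) x :=
      (Real.hasDerivAt_cosh (s x)).comp x (hds x)
    have hlog : HasDerivAt (fun x => Real.log (Real.cosh (s x)))
        (Real.sinh (s x) * (θ/2) / Real.cosh (s x)) x := hc.log (hcpos x).ne'
    have h : HasDerivAt (fun x => -2 * Real.log (Real.cosh (s x) / Real.cosh (θ/4)))
        (-θ * Real.tanh (s x)) x := by
      have heq : (fun x => -2 * Real.log (Real.cosh (s x) / Real.cosh (θ/4)))
          = fun x => -2 * Real.log (Real.cosh (s x)) + 2 * Real.log (Real.cosh (θ/4)) := by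
        funext y
        rw [Real.log_div (hcpos y).ne' hc4.ne']; ring
      rw [heq]
      have := (hlog.const_mul (-2)).add_const (2 * Real.log (Real.cosh (θ/4)))
      refine this.congr_deriv ?_
      rw [Real.tanh_eq_sinh_div_cosh]; ring
    have hfun : u = fun x => -2 * Real.log (Real.cosh (s x) / Real.cosh (θ/4)) :=
      funext fun y => hu y
    rw [hfun]; exact h
  have hderiv1 : deriv u = fun x => -θ * Real.tanh (s x) :=
    funext fun x => (hd1 x).deriv
  intro x _
  -- second derivative
  have hsinh : HasDerivAt (fun x => Real.sinh (s x)) (Real.cosh (s x) * (θ/2)) x :=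
    (Real.hasDerivAt_sinh (s x)).comp x (hds x)
  have hcosh : HasDerivAt (fun x => Real.cosh (s x)) (Real.sinh (s x) * (θ/2)) x :=
    (Real.hasDerivAt_cosh (s x)).comp x (hds x)
  have htanh : HasDerivAt (fun x => Real.tanh (s x))
      ((θ/2) / Real.cosh (s x) ^ 2) x := by
    have h := hsinh.div hcosh (hcpos x).ne'
    have heq : (fun x => Real.sinh (s x) / Real.cosh (s x)) = fun x => Real.tanh (s x) := by
      funext y; rw [Real.tanh_eq_sinh_div_cosh]
    rw [show ((fun x => Real.sinh (s x)) / fun x => Real.cosh (s x)) = fun x => Real.tanh (s x) from heq] at h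
    refine h.congr_deriv ?_
    have := Real.cosh_sq_sub_sinh_sq (s x)
    field_simp
    nlinarith [this]
  have hd2 : HasDerivAt (deriv u) (-θ * ((θ/2) / Real.cosh (s x) ^ 2)) x := by
    rw [hderiv1]
    exact htanh.const_mul (-θ)
  rw [hd2.deriv, hu]
  have hexp : Real.exp (-2 * Real.log (Real.cosh ((x - 1/2) * θ / 2) / Real.cosh (θ / 4)))
      = Real.cosh (θ/4) ^ 2 / Real.cosh (s x) ^ 2 := by
    have hrpos : (0:ℝ) < Real.cosh (s x) / Real.cosh (θ/4) := div_pos (hcpos x) hc4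
    have : -2 * Real.log (Real.cosh (s x) / Real.cosh (θ/4))
        = Real.log ((Real.cosh (s x) / Real.cosh (θ/4))⁻¹ ^ 2) := by
      rw [Real.log_pow, Real.log_inv]; push_cast; ring
    rw [show ((x - 1/2) * θ / 2) = s x from rfl, this,
      Real.exp_log (by positivity)]
    rw [inv_div]
    ring
  rw [hexp]
  have hc2 : Real.cosh (s x) ^ 2 ≠ 0 := (pow_pos (hcpos x) 2).ne'
  field_simp
  nlinarith [hθsq]
end
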